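/- Suppose given a commutative diagram of abelian groups with exact columns in which the rows are complexes: top row 0 → 0 → (E/μ_p)♭ → E♭ → 0, middle row 0 → M → G♭ → E♭ → 0, bottom row 0 → M → M → 0 → 0 (identity on M). If additionally there is an exact sequence 0 → ℤ/pℤ → (E/μ_p)♭ → E♭ → 0, then the middle row 0 → M → G♭ → E♭ → 0 has middle cohomology isomorphic to ℤ/pℤ; in particular it is not exact. -/

import Mathlib

/-- Diagram chase from Example "flats are not exact". Given a
commutative diagram of abelian groups with exact columns, whose rows are the
complexes `0 → (E/μ_p)♭ → E♭ → 0` (top), `0 → M → G♭ → E♭ → 0` (middle) and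
`0 → M = M → 0 → 0` (bottom), and an exact sequence
`0 → ℤ/pℤ → (E/μ_p)♭ → E♭ → 0`, the middle cohomology of the middle row is
`ℤ/pℤ`; in particular the middle row is not exact. -/
theorem middle_cohomology_is_zmod_p
    {M Gf Ef EPf : Type*} [AddCommGroup M] [AddCommGroup Gf]
    [AddCommGroup Ef] [AddCommGroup EPf] (p : ℕ) (hp : p.Prime)
    -- middle row, a complex
    (i : M →+ Gf) (q : Gf →+ Ef) (hi : Function.Injective i)
    (hcplx : q.comp i = 0) (hq : Function.Surjective q)
    -- top row map
    (t : EPf →+ Ef)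
    -- middle column, exact: 0 → (E/μ_p)♭ → G♭ → M → 0
    (u : EPf →+ Gf) (v : Gf →+ M)
    (hu : Function.Injective u) (huv : u.range = v.ker)
    (hv : Function.Surjective v)
    -- commutativity of the squares
    (hsq₁ : q.comp u = t) (hsq₂ : v.comp i = AddMonoidHom.id M)
    -- the exact sequence 0 → ℤ/pℤ → (E/μ_p)♭ → E♭ → 0
    (w : ZMod p →+ EPf) (hw : Function.Injective w)
    (hwt : w.range = t.ker) (ht : Function.Surjective t) :
    Nonempty ((↥q.ker ⧸ (i.range.addSubgroupOf q.ker)) ≃+ ZMod p) ∧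
    i.range ≠ q.ker := by
  classical
  haveI : Fact p.Prime := ⟨hp⟩
  have hvi : ∀ m : M, v (i m) = m := fun m => congrArg (fun f => f m) hsq₂
  have hqu : ∀ x : EPf, q (u x) = t x := fun x => congrArg (fun f => f x) hsq₁
  have hqi : ∀ m : M, q (i m) = 0 := fun m => congrArg (fun f => f m) hcplx
  -- d g = g - i (v g) lands in u.range
  have hdu : ∀ g : Gf, g - i (v g) ∈ u.range := by
    intro g
    rw [huv, AddMonoidHom.mem_ker, map_sub, hvi, sub_self]
  set eu : EPf ≃+ u.range := AddMonoidHom.ofInjective hu with heu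
  have hue : ∀ x : u.range, u (eu.symm x) = (x : Gf) := fun x =>
    AddMonoidHom.apply_ofInjective_symm hu x
  -- e : Gf →+ EPf with u (e g) = g - i (v g)
  set e : Gf →+ EPf :=
    eu.symm.toAddMonoidHom.comp
      ((AddMonoidHom.id Gf - i.comp v).codRestrict u.range hdu) with he
  have hue' : ∀ g : Gf, u (e g) = g - i (v g) := by
    intro g
    exact hue ⟨g - i (v g), hdu g⟩
  -- on ker q, e lands in w.range
  have hmem : ∀ x : q.ker, e (x : Gf) ∈ w.range := by
    intro x
    rw [hwt, AddMonoidHom.mem_ker, ← hqu, hue', map_sub, hqi, sub_zero]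
    exact x.2
  set ew : ZMod p ≃+ w.range := AddMonoidHom.ofInjective hw with hew
  have hwe : ∀ x : w.range, w (ew.symm x) = (x : EPf) := fun x =>
    AddMonoidHom.apply_ofInjective_symm hw x
  set φ : q.ker →+ ZMod p :=
    ew.symm.toAddMonoidHom.comp
      ((e.comp q.ker.subtype).codRestrict w.range hmem) with hφ
  have hwφ : ∀ x : q.ker, w (φ x) = e (x : Gf) := by
    intro x
    exact hwe ⟨e (x : Gf), hmem x⟩
  -- surjectivity
  have hsurj : Function.Surjective φ := by
    intro z
    have hg : u (w z) ∈ q.ker := by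
      rw [AddMonoidHom.mem_ker, hqu]
      have : w z ∈ t.ker := hwt ▸ ⟨z, rfl⟩
      exact this
    refine ⟨⟨u (w z), hg⟩, ?_⟩
    apply hw
    rw [hwφ]
    apply hu
    rw [hue']
    have hv0 : v (u (w z)) = 0 := by
      have : u (w z) ∈ v.ker := huv ▸ ⟨w z, rfl⟩
      exact this
    rw [hv0, map_zero, sub_zero]
  -- kernel computation
  have hker : φ.ker = i.range.addSubgroupOf q.ker := by
    ext x
    constructor
    · intro hx
      have h0 : w (φ x) = w 0 := by rw [hx]
      rw [hwφ, map_zero] at h0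
      have : u (e (x : Gf)) = u 0 := by rw [h0]
      rw [hue', map_zero, sub_eq_zero] at this
      exact ⟨v (x : Gf), this.symm⟩
    · rintro ⟨m, hm⟩
      apply hw
      rw [hwφ, map_zero]
      apply hu
      simp only [AddSubgroup.coe_subtype] at hm
      rw [hue', map_zero, sub_eq_zero, ← hm, hvi]
  constructor
  · exact ⟨(QuotientAddGroup.quotientAddEquivOfEq hker.symm).trans
      (QuotientAddGroup.quotientKerEquivOfSurjective φ hsurj)⟩
  · intro h
    have htop : i.range.addSubgroupOf q.ker = ⊤ := by
      rw [AddSubgroup.eq_top_iff']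
      intro x
      have hx : (x : Gf) ∈ i.range := by rw [h]; exact x.2
      exact AddSubgroup.mem_addSubgroupOf.2 hx
    have hsub : Subsingleton (↥q.ker ⧸ (i.range.addSubgroupOf q.ker)) := by
      rw [htop]; exact QuotientAddGroup.subsingleton_quotient_top
    haveI := Fact.mk hp.one_lt
    haveI : Nontrivial (ZMod p) := ZMod.nontrivial p
    have eq : (↥q.ker ⧸ (i.range.addSubgroupOf q.ker)) ≃+ ZMod p :=
      (QuotientAddGroup.quotientAddEquivOfEq hker.symm).trans
        (QuotientAddGroup.quotientKerEquivOfSurjective φ hsurj)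
    haveI : Subsingleton (ZMod p) := eq.symm.toEquiv.subsingleton
    exact false_of_nontrivial_of_subsingleton (ZMod p)
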